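/- Consider energy consumption minimization over T time blocks for a single user over an AWGN channel with unit noise variance, where transmitting with power P_t ≥ 0 in block t yields rate R_t = log₂(1 + P_t) and the throughput constraint is D ≤ ∑_{t=1}^T R_t. Then every feasible power allocation satisfies ∑_{t=1}^T P_t ≥ T·(2^{D/T} − 1); that is, for any P : Fin T → ℝ with P t ≥ 0 for all t and D ≤ ∑_t log₂(1 + P t), one has ∑_t P t ≥ T·(2^{D/T} − 1). -/

import Mathlib

/-- Lower bound on total energy for single-user AWGN energy minimization over `T` blocks:
any feasible power allocation `P` (nonnegative powers, throughput `D ≤ ∑ log₂(1 + P t)`)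
uses total energy at least `T * (2^(D/T) - 1)`. -/
theorem awgn_energy_lower_bound (T : ℕ) (hT : 0 < T) (D : ℝ) (hD : 0 ≤ D)
    (P : Fin T → ℝ) (hP : ∀ t, 0 ≤ P t)
    (hfeas : D ≤ ∑ t, Real.logb 2 (1 + P t)) :
    ∑ t, P t ≥ (T : ℝ) * ((2 : ℝ) ^ (D / (T : ℝ)) - 1) := by
  set S := ∑ t, P t with hSdef
  have hS : 0 ≤ S := Finset.sum_nonneg fun t _ => hP t
  have hn : (0 : ℝ) < (T : ℝ) := by exact_mod_cast hT
  have hx : ∀ t, (0 : ℝ) < 1 + P t := fun t => by linarith [hP t]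
  -- AM-GM
  have hgm : ∏ t, (1 + P t) ^ ((T : ℝ)⁻¹) ≤ ∑ t, (T : ℝ)⁻¹ * (1 + P t) := by
    apply Real.geom_mean_le_arith_mean_weighted
    · intro i _; positivity
    · simp [Finset.sum_const, Finset.card_univ, mul_comm]
      field_simp
    · intro i _; exact (hx i).le
  have hrhs : ∑ t, (T : ℝ)⁻¹ * (1 + P t) = 1 + S / T := by
    rw [← Finset.mul_sum, Finset.sum_add_distrib, Finset.sum_const, Finset.card_univ,
      Fintype.card_fin]
    field_simp
    simp [nsmul_eq_mul, hSdef]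
  have hlhs : ∏ t, (1 + P t) ^ ((T : ℝ)⁻¹) = (∏ t, (1 + P t)) ^ ((T : ℝ)⁻¹) :=
    Real.finset_prod_rpow _ _ (fun i _ => (hx i).le) _
  have hprodpos : 0 < ∏ t, (1 + P t) := Finset.prod_pos fun t _ => hx t
  have key : D / T ≤ Real.logb 2 (1 + S / T) := by
    have h1 : ∑ t, Real.logb 2 (1 + P t) = Real.logb 2 (∏ t, (1 + P t)) := by
      rw [Real.logb_prod _ _ (fun t _ => (hx t).ne')]
    have h2 : Real.logb 2 ((∏ t, (1 + P t)) ^ ((T : ℝ)⁻¹)) ≤ Real.logb 2 (1 + S / T) := by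
      apply Real.logb_le_logb_of_le one_lt_two (by positivity)
      rw [← hlhs]; rw [hrhs] at hgm; exact hgm
    rw [Real.logb_rpow_eq_mul_logb_of_pos hprodpos] at h2
    calc D / T = (T : ℝ)⁻¹ * D := by ring
    _ ≤ (T : ℝ)⁻¹ * Real.logb 2 (∏ t, (1 + P t)) := by
        apply mul_le_mul_of_nonneg_left _ (by positivity)
        rw [← h1]; exact hfeas
    _ ≤ Real.logb 2 (1 + S / T) := by rw [mul_comm] at h2 ⊢; exact h2
  have h3 : (2 : ℝ) ^ (D / (T : ℝ)) ≤ 1 + S / T := by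
    have := Real.rpow_le_rpow_left_iff (x := 2) one_lt_two (y := D / T)
      (z := Real.logb 2 (1 + S / T))
    have h4 : (2 : ℝ) ^ Real.logb 2 (1 + S / T) = 1 + S / T :=
      Real.rpow_logb two_pos (by norm_num) (by positivity)
    calc (2:ℝ) ^ (D / (T:ℝ)) ≤ 2 ^ Real.logb 2 (1 + S / T) := this.mpr key
    _ = 1 + S / T := h4
  have : (T : ℝ) * ((2 : ℝ) ^ (D / (T : ℝ)) - 1) ≤ (T : ℝ) * (S / T) := by
    apply mul_le_mul_of_nonneg_left (by linarith) hn.le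
  rw [mul_div_cancel₀ _ hn.ne'] at this
  linarith
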